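/- The winding number of the lift of any planar knotoid in the double branched cover solid torus is odd: the class of γ_T(k) in H₁(S¹ × D²; ℤ) ≅ ℤ is an odd integer. -/

import Mathlib

open Complex

/-- The deck involution of the double branched cover `S¹ × D² → D² × I`:
half of the circle factor is reflected (`θ ↦ -θ`) and the disc factor is
conjugated; its fixed point set is the two "branch arcs"
`{0} × ℝ` and `{1/2} × ℝ`. -/
noncomputable def deckInv : AddCircle (1 : ℝ) × ℂ → AddCircle (1 : ℝ) × ℂ :=
  fun p => (-p.1, starRingEnd ℂ p.2)

section Aux

open Set

instance fact_one_pos_real : Fact (0 < (1:ℝ)) := ⟨one_pos⟩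

/-- A continuous local section of `ℝ → AddCircle 1` taking values in `[-1/2, 1/2)`. -/
noncomputable def sec' : AddCircle (1:ℝ) → ℝ := fun x => (AddCircle.equivIco 1 (-(1/2)) x : ℝ)

lemma sec'_coe (x : AddCircle (1:ℝ)) : ((sec' x : ℝ) : AddCircle (1:ℝ)) = x :=
  (AddCircle.equivIco 1 (-(1/2))).symm_apply_apply x

lemma sec'_mem (x : AddCircle (1:ℝ)) : sec' x ∈ Ico (-(1/2) : ℝ) (1/2 : ℝ) := by
  have h := (AddCircle.equivIco 1 (-(1/2)) x).2
  norm_num at h ⊢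
  exact h

lemma sec'_coe_eq {y : ℝ} (hy : y ∈ Ico (-(1/2) : ℝ) (1/2 : ℝ)) :
    sec' ((y : ℝ) : AddCircle (1:ℝ)) = y := by
  have h1 := sec'_coe ((y : ℝ) : AddCircle (1:ℝ))
  have hy' : y ∈ Ico (-(1/2) : ℝ) (-(1/2) + 1) := by norm_num at hy ⊢; exact hy
  have hm : sec' ((y : ℝ) : AddCircle (1:ℝ)) ∈ Ico (-(1/2) : ℝ) (-(1/2) + 1) := by
    have := sec'_mem ((y : ℝ) : AddCircle (1:ℝ)); norm_num at this ⊢; exact this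
  exact (AddCircle.coe_eq_coe_iff_of_mem_Ico hm hy').mp h1

lemma sec'_zero : sec' (0 : AddCircle (1:ℝ)) = 0 := by
  have : ((0:ℝ) : AddCircle (1:ℝ)) = 0 := by norm_num
  rw [← this, sec'_coe_eq (by norm_num)]

lemma sec'_contAt {x : AddCircle (1:ℝ)} (hx : x ≠ ((-(1/2) : ℝ) : AddCircle (1:ℝ))) :
    ContinuousAt sec' x :=
  continuous_subtype_val.continuousAt.comp (AddCircle.continuousAt_equivIco 1 (-(1/2)) hx)

lemma norm_lt_ne_half {x : AddCircle (1:ℝ)} (hx : ‖x‖ < 1/2) :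
    x ≠ ((-(1/2) : ℝ) : AddCircle (1:ℝ)) := by
  intro h
  rw [h, AddCircle.norm_eq] at hx
  rw [round_eq] at hx
  norm_num [_root_.abs_of_pos] at hx

lemma contOn_union_closed {α : Type*} [TopologicalSpace α] {f : ℝ → α} {s t : Set ℝ}
    (hs : IsClosed s) (ht : IsClosed t) (hf : ContinuousOn f s) (hg : ContinuousOn f t) :
    ContinuousOn f (s ∪ t) := by
  intro x hx
  apply ContinuousWithinAt.union
  · by_cases h : x ∈ s
    · exact hf x h
    · exact continuousWithinAt_of_notMem_closure (by rwa [hs.closure_eq])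
  · by_cases h : x ∈ t
    · exact hg x h
    · exact continuousWithinAt_of_notMem_closure (by rwa [ht.closure_eq])

/-- Path lifting for the covering `ℝ → AddCircle 1` on a compact interval. -/
lemma exists_lift_icc (g : ℝ → AddCircle (1:ℝ)) (hg : Continuous g) {a b : ℝ} (hab : a ≤ b)
    (v : ℝ) (hv : ((v : ℝ) : AddCircle (1:ℝ)) = g a) :
    ∃ G : ℝ → ℝ, ContinuousOn G (Icc a b) ∧ G a = v ∧
      ∀ t ∈ Icc a b, ((G t : ℝ) : AddCircle (1:ℝ)) = g t := by
  have hc : UniformContinuousOn g (Icc a b) :=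
    (isCompact_Icc).uniformContinuousOn_of_continuous hg.continuousOn
  rw [Metric.uniformContinuousOn_iff] at hc
  obtain ⟨δ, hδ, hδ'⟩ := hc (1/2) (by norm_num)
  obtain ⟨n, hn⟩ := exists_nat_gt ((b - a)/δ)
  set N : ℕ := n + 1 with hN
  have hNpos : (0:ℝ) < N := by positivity
  set s : ℝ := (b - a)/N with hsdef
  have hs0 : 0 ≤ s := div_nonneg (by linarith) hNpos.le
  have hsδ : s < δ := by
    rw [hsdef, div_lt_iff₀ hNpos]
    have h1 : (b - a)/δ < N := by
      push_cast [hN]; linarith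
    calc b - a = δ * ((b-a)/δ) := by field_simp
    _ < δ * N := by exact mul_lt_mul_of_pos_left h1 hδ
  set x : ℕ → ℝ := fun i => a + i * s with hxdef
  have hx0 : x 0 = a := by simp [hxdef]
  have hxN : x N = b := by
    simp only [hxdef, hsdef]
    field_simp
    ring
  have hstep : ∀ i : ℕ, x (i+1) - x i = s := by
    intro i; simp only [hxdef]; push_cast; ring
  have hxa : ∀ i : ℕ, a ≤ x i := by
    intro i; simp only [hxdef]; nlinarith [mul_nonneg (Nat.cast_nonneg i : (0:ℝ) ≤ i) hs0]
  have hxb : ∀ i : ℕ, i ≤ N → x i ≤ b := by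
    intro i hi
    rw [← hxN]
    simp only [hxdef]
    have : (i:ℝ) ≤ N := by exact_mod_cast hi
    nlinarith
  have hxmono : ∀ i : ℕ, x i ≤ x (i+1) := by
    intro i; have := hstep i; linarith
  have key : ∀ i : ℕ, i + 1 ≤ N → ∀ t ∈ Icc (x i) (x (i+1)), ‖g t - g (x i)‖ < 1/2 := by
    intro i hi t ht
    have hti : t ∈ Icc a b := ⟨le_trans (hxa i) ht.1, le_trans ht.2 (hxb _ hi)⟩
    have hxi : x i ∈ Icc a b := ⟨hxa i, le_trans (hxmono i) (hxb _ hi)⟩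
    have hd : dist t (x i) < δ := by
      rw [Real.dist_eq, _root_.abs_of_nonneg (by linarith [ht.1])]
      have := hstep i; linarith [ht.2]
    have := hδ' t hti (x i) hxi hd
    rwa [dist_eq_norm] at this
  have main : ∀ i : ℕ, i ≤ N → ∃ G : ℝ → ℝ, ContinuousOn G (Icc a (x i)) ∧ G a = v ∧
      ∀ t ∈ Icc a (x i), ((G t : ℝ) : AddCircle (1:ℝ)) = g t := by
    intro i
    induction i with
    | zero =>
      intro _
      refine ⟨fun _ => v, continuousOn_const, rfl, ?_⟩
      rw [hx0]
      intro t ht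
      have : t = a := le_antisymm ht.2 ht.1
      rw [this, hv]
    | succ i ih =>
      intro hi
      obtain ⟨G, hGc, hGa, hGl⟩ := ih (Nat.le_of_succ_le hi)
      classical
      set G' : ℝ → ℝ := fun t => if t ≤ x i then G t else G (x i) + sec' (g t - g (x i))
        with hG'def
      have hxi_mem : x i ∈ Icc a (x i) := ⟨hxa i, le_refl _⟩
      have hjunction : G (x i) + sec' (g (x i) - g (x i)) = G (x i) := by
        rw [sub_self, sec'_zero, add_zero]
      have heq1 : EqOn G' G (Icc a (x i)) := by
        intro t ht; simp only [hG'def]; rw [if_pos ht.2]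
      have heq2 : EqOn G' (fun t => G (x i) + sec' (g t - g (x i))) (Icc (x i) (x (i+1))) := by
        intro t ht
        simp only [hG'def]
        by_cases h : t ≤ x i
        · have : t = x i := le_antisymm h ht.1
          rw [if_pos h, this, hjunction]
        · rw [if_neg h]
      have hpiece2 : ContinuousOn (fun t => G (x i) + sec' (g t - g (x i)))
          (Icc (x i) (x (i+1))) := by
        intro t ht
        have hnorm := key i hi t ht
        have hsec : ContinuousAt sec' (g t - g (x i)) := sec'_contAt (norm_lt_ne_half hnorm)
        have hin : ContinuousAt (fun u => g u - g (x i)) t :=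
          (hg.sub continuous_const).continuousAt
        have : ContinuousAt (fun u => G (x i) + sec' (g u - g (x i))) t :=
          continuousAt_const.add (ContinuousAt.comp (g := sec') hsec hin)
        exact this.continuousWithinAt
      have hG'c : ContinuousOn G' (Icc a (x (i+1))) := by
        rw [← Icc_union_Icc_eq_Icc (hxa i) (hxmono i)]
        exact contOn_union_closed isClosed_Icc isClosed_Icc
          (hGc.congr heq1) (hpiece2.congr heq2)
      refine ⟨G', hG'c, ?_, ?_⟩
      · simp only [hG'def]; rw [if_pos (hxa i), hGa]
      · intro t ht
        by_cases h : t ≤ x i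
        · simp only [hG'def]; rw [if_pos h]
          exact hGl t ⟨ht.1, h⟩
        · simp only [hG'def]; rw [if_neg h]
          have h1 : ((G (x i) : ℝ) : AddCircle (1:ℝ)) = g (x i) := hGl (x i) hxi_mem
          rw [AddCircle.coe_add, h1, sec'_coe]
          abel
  obtain ⟨G, h1, h2, h3⟩ := main N (le_refl N)
  rw [hxN] at h1 h3
  exact ⟨G, h1, h2, h3⟩

/-- A continuous integer-valued function on an interval takes equal values at the endpoints. -/
lemma intValued_eq {f : ℝ → ℝ} {a b : ℝ} (hab : a ≤ b) (hf : ContinuousOn f (Icc a b))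
    (hint : ∀ t ∈ Icc a b, ∃ m : ℤ, f t = m) : f a = f b := by
  obtain ⟨ma, hma⟩ := hint a ⟨le_refl a, hab⟩
  obtain ⟨mb, hmb⟩ := hint b ⟨hab, le_refl b⟩
  by_contra hne
  have absurd : ∀ (p q : ℤ), p < q → ((p:ℝ) + 1/2) ∈ f '' (Icc a b) → False := by
    intro p q hpq hmem
    obtain ⟨t, ht, hft⟩ := hmem
    obtain ⟨mt, hmt⟩ := hint t ht
    rw [hmt] at hft
    have h2 : (2*mt : ℝ) = 2*p + 1 := by linarith
    have : (2*mt : ℤ) = 2*p + 1 := by exact_mod_cast h2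
    omega
  rcases lt_or_gt_of_ne hne with h | h
  · have hpq : ma < mb := by exact_mod_cast hma ▸ hmb ▸ h
    refine absurd ma mb hpq (intermediate_value_Icc hab hf ⟨?_, ?_⟩)
    · rw [hma]; linarith
    · rw [hmb]
      have : (ma:ℝ) + 1 ≤ mb := by exact_mod_cast hpq
      linarith
  · have hpq : mb < ma := by exact_mod_cast hma ▸ hmb ▸ h
    refine absurd mb ma hpq (intermediate_value_Icc' hab hf ⟨?_, ?_⟩)
    · rw [hmb]; linarith
    · rw [hma]
      have : (mb:ℝ) + 1 ≤ ma := by exact_mod_cast hpq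
      linarith

lemma coe_int_shift (y : ℝ) (m : ℤ) :
    (((y + m : ℝ)) : AddCircle (1:ℝ)) = ((y:ℝ) : AddCircle (1:ℝ)) := by
  rw [AddCircle.coe_add]
  have : (((m:ℝ)) : AddCircle (1:ℝ)) = 0 := by
    rw [AddCircle.coe_eq_zero_iff]; exact ⟨m, by simp⟩
  rw [this, add_zero]

lemma int_of_coe_eq_zero' {u : ℝ} (h : ((u:ℝ) : AddCircle (1:ℝ)) = 0) : ∃ k : ℤ, u = k := by
  rw [AddCircle.coe_eq_zero_iff] at h
  obtain ⟨n, hn⟩ := h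
  exact ⟨n, by rw [← hn]; simp⟩

lemma int_diff_of_coe_eq {u v : ℝ}
    (h : ((u:ℝ) : AddCircle (1:ℝ)) = ((v:ℝ) : AddCircle (1:ℝ))) :
    ∃ k : ℤ, u = v + k := by
  have h0 : ((u - v : ℝ) : AddCircle (1:ℝ)) = 0 := by
    rw [AddCircle.coe_sub, h, sub_self]
  obtain ⟨k, hk⟩ := int_of_coe_eq_zero' h0
  exact ⟨k, by linarith⟩

end Aux

/-- the winding number of the lift of a planar knotoid in the double
branched cover solid torus is odd.  The lifted knot `K` is a closed curve in
`S¹ × D²` invariant under the deck involution, meeting each of the two branch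
arcs (`θ = 0` and `θ = 1/2`) exactly once (the lifts of the two endpoints of the
knotoid).  If `F` is a continuous lift to `ℝ` of the `S¹`-coordinate of `K`, the
winding number `w = F 1 - F 0` is an odd integer. -/
theorem stmt14 (K : C(AddCircle (1 : ℝ), AddCircle (1 : ℝ) × ℂ))
    (hinj : Function.Injective K)
    (hequiv : ∀ t, ∃ s, K s = deckInv (K t))
    (hfix0 : ∃! t, deckInv (K t) = K t ∧ (K t).1 = (0 : ℝ))
    (hfix1 : ∃! t, deckInv (K t) = K t ∧ (K t).1 = ((1 : ℝ) / 2 : ℝ))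
    (F : ℝ → ℝ) (hFcont : Continuous F)
    (hFlift : ∀ t : ℝ, ((F t : ℝ) : AddCircle (1 : ℝ)) = (K (t : ℝ)).1)
    (w : ℤ) (hw : F 1 = F 0 + w) :
    Odd w := by
  classical
  open Set in
  have hdc : Continuous deckInv := by
    unfold deckInv
    exact (continuous_fst.neg).prodMk (Complex.continuous_conj.comp continuous_snd)
  have hKemb := K.continuous.isClosedEmbedding hinj
  set τ : AddCircle (1:ℝ) → AddCircle (1:ℝ) := fun t => Classical.choose (hequiv t) with hτdef
  have hτ : ∀ t, K (τ t) = deckInv (K t) := fun t => Classical.choose_spec (hequiv t)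
  have hτc : Continuous τ := by
    rw [hKemb.toIsEmbedding.continuous_iff]
    have h : (⇑K ∘ τ) = deckInv ∘ ⇑K := funext fun t => hτ t
    rw [h]
    exact hdc.comp K.continuous
  obtain ⟨t0, ⟨hK0, hc0⟩, -⟩ := hfix0
  obtain ⟨t1, ⟨hK1, hc1⟩, -⟩ := hfix1
  have hτ0 : τ t0 = t0 := hinj (by rw [hτ, hK0])
  have hτ1 : τ t1 = t1 := hinj (by rw [hτ, hK1])
  obtain ⟨y0, hy0⟩ := QuotientAddGroup.mk_surjective t0
  obtain ⟨y1, hy1⟩ := QuotientAddGroup.mk_surjective t1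
  set a1 : ℝ := y1 + ((max ⌈y0 - y1⌉ 0 : ℤ) : ℝ) with ha1def
  have ha1 : ((a1:ℝ) : AddCircle (1:ℝ)) = t1 := by rw [ha1def, coe_int_shift, hy1]
  have h01 : y0 ≤ a1 := by
    have h1 : (y0 - y1 : ℝ) ≤ (⌈y0 - y1⌉ : ℤ) := Int.le_ceil _
    have h2 : ((⌈y0 - y1⌉ : ℤ) : ℝ) ≤ ((max ⌈y0 - y1⌉ 0 : ℤ) : ℝ) := by
      exact_mod_cast le_max_left _ _
    rw [ha1def]; linarith
  set g : ℝ → AddCircle (1:ℝ) := fun t => τ (((t:ℝ) : AddCircle (1:ℝ))) with hgdef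
  have hgc : Continuous g := hτc.comp (AddCircle.continuous_mk' 1)
  have hgy0 : ((y0 : ℝ) : AddCircle (1:ℝ)) = g y0 := by
    simp only [hgdef]; rw [hy0, hτ0]
  obtain ⟨G, hGc, hGy0, hGl⟩ := exists_lift_icc g hgc h01 y0 hgy0
  -- periodicity of F
  have hψ : ∀ u : ℝ, ∃ m : ℤ, F (u + 1) - F u = m := by
    intro u
    apply int_of_coe_eq_zero'
    have h1 : ((u + 1 : ℝ) : AddCircle (1:ℝ)) = ((u:ℝ) : AddCircle (1:ℝ)) :=
      AddCircle.coe_add_period 1 u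
    rw [AddCircle.coe_sub, hFlift, hFlift, h1, sub_self]
  have hψc : Continuous fun u : ℝ => F (u + 1) - F u :=
    (hFcont.comp (continuous_id.add continuous_const)).sub hFcont
  have hconst : ∀ t : ℝ, F (t + 1) - F t = w := by
    have h0 : F (0 + 1) - F 0 = w := by rw [zero_add, hw]; ring
    intro t
    rcases le_total t 0 with h | h
    · have e := intValued_eq h hψc.continuousOn (fun u _ => hψ u)
      rw [← h0]; exact e
    · have e := intValued_eq h hψc.continuousOn (fun u _ => hψ u)
      rw [← h0]; exact e.symm
  have hper : ∀ t : ℝ, F (t + 1) = F t + w := fun t => by have := hconst t; linarith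
  have hshift : ∀ (m : ℤ) (t : ℝ), F (t + m) = F t + m * w := by
    intro m
    induction m using Int.induction_on with
    | zero => simp
    | succ n ih =>
      intro t
      have h : (t + ((n:ℤ)+1 : ℤ) : ℝ) = (t + ((n:ℤ):ℝ)) + 1 := by push_cast; ring
      rw [h, hper, ih]
      push_cast; ring
    | pred n ih =>
      intro t
      have h1 : (t + (-(n:ℤ)-1 : ℤ) : ℝ) + 1 = t + ((-(n:ℤ):ℤ) : ℝ) := by push_cast; ring
      have h2 := hper (t + ((-(n:ℤ)-1 : ℤ) : ℝ))
      rw [h1, ih] at h2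
      push_cast at h2 ⊢
      linarith
  -- the function F(G t) + F t is a constant integer on [y0, a1]
  set φ : ℝ → ℝ := fun t => F (G t) + F t with hφdef
  have hφc : ContinuousOn φ (Set.Icc y0 a1) :=
    (hFcont.comp_continuousOn hGc).add hFcont.continuousOn
  have hφint : ∀ t ∈ Set.Icc y0 a1, ∃ m : ℤ, φ t = m := by
    intro t ht
    apply int_of_coe_eq_zero'
    have h1 : ((G t : ℝ) : AddCircle (1:ℝ)) = g t := hGl t ht
    have h2 : (K (g t)).1 = -(K (((t:ℝ) : AddCircle (1:ℝ)))).1 := by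
      simp only [hgdef]; rw [hτ]; rfl
    simp only [hφdef]
    rw [AddCircle.coe_add, hFlift, hFlift, h1, h2, neg_add_cancel]
  have hφeq : φ y0 = φ a1 := intValued_eq h01 hφc hφint
  obtain ⟨m0, hm0⟩ : ∃ m : ℤ, F y0 = m := by
    apply int_of_coe_eq_zero'
    rw [hFlift, hy0, hc0]
    norm_num
  obtain ⟨m1, hm1⟩ : ∃ m : ℤ, F a1 - 1/2 = m := by
    apply int_of_coe_eq_zero'
    rw [AddCircle.coe_sub, hFlift, ha1, hc1, sub_self]
  have hGa1 : ((G a1 : ℝ) : AddCircle (1:ℝ)) = ((a1:ℝ) : AddCircle (1:ℝ)) := by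
    rw [hGl a1 ⟨h01, le_refl _⟩]
    simp only [hgdef]; rw [ha1, hτ1]
  obtain ⟨k, hk⟩ := int_diff_of_coe_eq hGa1
  have e1 : φ y0 = 2 * F y0 := by simp only [hφdef]; rw [hGy0]; ring
  have e2 : φ a1 = 2 * F a1 + k * w := by
    simp only [hφdef]; rw [hk, hshift]; ring
  have ereal : (2*m0 : ℝ) = 2*m1 + 1 + k*w := by
    have h := hφeq
    rw [e1, e2] at h
    have : ((k:ℝ) * (w:ℝ)) = (k*w : ℤ) := by push_cast; ring
    linarith
  have eint : (2*m0 : ℤ) = 2*m1 + 1 + k*w := by exact_mod_cast ereal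
  have hkw : Odd (k*w) := ⟨m0 - m1 - 1, by linarith⟩
  exact (Int.odd_mul.mp hkw).2
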